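/- arXiv:1005.0602 — 3 statements merged into one kernel-verified Lean document; each statement's English description precedes it below -/
import Mathlib

section
/- Let y = p/q ∈ K(n), written in lowest terms, be any solution of the equation a_0 y + a_1 N y + ⋯ + a_m N^m y = f. Then max{ i ∈ ℕ : gcd(q, N^i q) ≠ 1 } ≤ s, where s := max{ i ∈ ℕ : gcd(N^i a_0, N^{−m} a_m) ≠ 1 } (with the convention max ∅ = −∞). -/
/-- The substitution homomorphism `n ↦ n + i` on `K[n]`. -/
noncomputable def pShiftHom (K : Type*) [Field K] (i : ℤ) :
    Polynomial K →ₐ[K] Polynomial K :=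
  Polynomial.aeval (Polynomial.X + Polynomial.C (i : K))

/-- The shift automorphism `N^i : q(n) ↦ q(n+i)` on `K[n]`. -/
noncomputable def pShift (K : Type*) [Field K] (i : ℤ) :
    Polynomial K ≃ₐ[K] Polynomial K :=
  AlgEquiv.ofAlgHom (pShiftHom K i) (pShiftHom K (-i))
    (by apply Polynomial.algHom_ext; simp [pShiftHom])
    (by apply Polynomial.algHom_ext; simp [pShiftHom])

/-- The shift automorphism `N^i` extended to the field of rational functions `K(n)`. -/
noncomputable def rShift (K : Type*) [Field K] (i : ℤ) : RatFunc K ≃+* RatFunc K :=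
  IsFractionRing.ringEquivOfRingEquiv (pShift K i).toRingEquiv

section Aux

variable {K : Type*} [Field K]

lemma pShift_apply (i : ℤ) (p : Polynomial K) :
    pShift K i p = p.comp (Polynomial.X + Polynomial.C (i : K)) := by
  simp [pShift, pShiftHom, Polynomial.aeval_def, Polynomial.comp, Polynomial.algebraMap_eq]

lemma pShift_pShift (i j : ℤ) (p : Polynomial K) :
    pShift K i (pShift K j p) = pShift K (i + j) p := by
  simp only [pShift_apply, Polynomial.comp_assoc]
  congr 1
  push_cast
  simp [Polynomial.add_comp]
  ring

lemma pShift_zero_apply (p : Polynomial K) : pShift K 0 p = p := by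
  simp [pShift_apply]

lemma pShift_dvd_iff (i : ℤ) (p q : Polynomial K) :
    pShift K i p ∣ pShift K i q ↔ p ∣ q := by
  constructor
  · intro h
    have := map_dvd (pShift K (-i)) h
    simpa [pShift_pShift, pShift_zero_apply] using this
  · exact fun h => map_dvd _ h

lemma pShift_irreducible_iff (i : ℤ) (p : Polynomial K) :
    Irreducible (pShift K i p) ↔ Irreducible p :=
  MulEquiv.irreducible_iff (pShift K i).toRingEquiv.toMulEquiv

lemma pShift_isUnit_iff (i : ℤ) (p : Polynomial K) :
    IsUnit (pShift K i p) ↔ IsUnit p := by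
  constructor
  · intro h
    have := h.map (pShift K (-i))
    simpa [pShift_pShift, pShift_zero_apply] using this
  · exact fun h => h.map _

lemma pShift_ne_zero (i : ℤ) {p : Polynomial K} (hp : p ≠ 0) : pShift K i p ≠ 0 := by
  intro h
  exact hp (by simpa [pShift_pShift, pShift_zero_apply] using congrArg (pShift K (-i)) h)

lemma rShift_algebraMap (i : ℤ) (p : Polynomial K) :
    rShift K i (algebraMap (Polynomial K) (RatFunc K) p)
      = algebraMap (Polynomial K) (RatFunc K) (pShift K i p) :=
  IsFractionRing.ringEquivOfRingEquiv_algebraMap _ p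

lemma cleared (m : ℕ) (a : ℕ → Polynomial K) (f p q : Polynomial K) (hq : q ≠ 0)
    (heq : ∑ i ∈ Finset.range (m + 1),
        algebraMap (Polynomial K) (RatFunc K) (a i) *
          (algebraMap (Polynomial K) (RatFunc K) (pShift K i p) /
           algebraMap (Polynomial K) (RatFunc K) (pShift K i q))
      = algebraMap (Polynomial K) (RatFunc K) f) :
    ∑ i ∈ Finset.range (m + 1),
        a i * pShift K i p * ∏ k ∈ (Finset.range (m + 1)).erase i, pShift K k q
      = f * ∏ k ∈ Finset.range (m + 1), pShift K k q := by
  have hinj : Function.Injective (algebraMap (Polynomial K) (RatFunc K)) :=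
    IsFractionRing.injective _ _
  set ι := algebraMap (Polynomial K) (RatFunc K) with hι
  apply hinj
  rw [map_sum, map_mul, map_prod, ← heq, Finset.sum_mul]
  apply Finset.sum_congr rfl
  intro i hi
  rw [map_mul, map_mul, map_prod]
  have hqi : ι (pShift K i q) ≠ 0 := by
    rw [hι, Ne, map_eq_zero_iff _ hinj]
    exact pShift_ne_zero _ hq
  have hQ : ∏ k ∈ Finset.range (m + 1), ι (pShift K k q)
      = ι (pShift K i q) * ∏ k ∈ (Finset.range (m + 1)).erase i, ι (pShift K k q) :=
    (Finset.mul_prod_erase _ _ hi).symm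
  rw [hQ]
  field_simp

lemma dvd_coeff_of_key {m : ℕ} {a : ℕ → Polynomial K} {f p q : Polynomial K}
    (key : ∑ i ∈ Finset.range (m + 1),
        a i * pShift K i p * ∏ k ∈ (Finset.range (m + 1)).erase i, pShift K k q
      = f * ∏ k ∈ Finset.range (m + 1), pShift K k q)
    {w : Polynomial K} (hw : Irreducible w) {i₀ : ℕ} (hi₀ : i₀ ∈ Finset.range (m + 1))
    (hwq : w ∣ pShift K i₀ q)
    (hwp : ¬ w ∣ pShift K i₀ p)
    (hwk : ∀ k ∈ Finset.range (m + 1), k ≠ i₀ → ¬ w ∣ pShift K k q) :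
    w ∣ a i₀ := by
  have hprime : Prime w := hw.prime
  have hRHS : w ∣ f * ∏ k ∈ Finset.range (m + 1), pShift K k q :=
    Dvd.dvd.mul_left
      (hwq.trans (Finset.dvd_prod_of_mem (fun k : ℕ => pShift K (k : ℤ) q) hi₀)) f
  have hsum : w ∣ ∑ i ∈ Finset.range (m + 1),
      a i * pShift K i p * ∏ k ∈ (Finset.range (m + 1)).erase i, pShift K k q := by
    rw [key]; exact hRHS
  have hothers : w ∣ ∑ i ∈ (Finset.range (m + 1)).erase i₀,
      a i * pShift K i p * ∏ k ∈ (Finset.range (m + 1)).erase i, pShift K k q := by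
    apply Finset.dvd_sum
    intro i hi
    have hi' : i₀ ∈ (Finset.range (m + 1)).erase i :=
      Finset.mem_erase.2 ⟨fun h => (Finset.mem_erase.1 hi).1 h.symm, hi₀⟩
    exact Dvd.dvd.mul_left
      (hwq.trans (Finset.dvd_prod_of_mem (fun k : ℕ => pShift K (k : ℤ) q) hi')) _
  have hterm : w ∣ a i₀ * pShift K i₀ p *
      ∏ k ∈ (Finset.range (m + 1)).erase i₀, pShift K k q := by
    have heq : a i₀ * pShift K i₀ p * ∏ k ∈ (Finset.range (m + 1)).erase i₀, pShift K k q
        = (∑ i ∈ Finset.range (m + 1),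
            a i * pShift K i p * ∏ k ∈ (Finset.range (m + 1)).erase i, pShift K k q)
          - ∑ i ∈ (Finset.range (m + 1)).erase i₀,
            a i * pShift K i p * ∏ k ∈ (Finset.range (m + 1)).erase i, pShift K k q := by
      rw [← Finset.add_sum_erase _ _ hi₀]; ring
    rw [heq]
    exact dvd_sub hsum hothers
  rcases hprime.dvd_mul.1 hterm with h1 | h2
  · rcases hprime.dvd_mul.1 h1 with h3 | h4
    · exact h3
    · exact absurd h4 hwp
  · exfalso
    obtain ⟨k, hk, hdk⟩ := (hprime.dvd_finset_prod_iff _).1 h2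
    exact hwk k (Finset.mem_of_mem_erase hk) (Finset.mem_erase.1 hk).1 hdk

end Aux

/-- **Abramov's dispersion bound (Theorem 1).**
Let `y = p/q ∈ K(n)` (in lowest terms, so `q = y.denom` is the canonical denominator)
be any solution of `a₀ y + a₁ N y + ⋯ + a_m N^m y = f`.  Then
`max { i ∈ ℕ : gcd(q, N^i q) ≠ 1 } ≤ max { i ∈ ℕ : gcd(N^i a₀, N^{-m} a_m) ≠ 1 }`,
where the maxima (with the convention `max ∅ = -∞`) are taken in `WithBot ℕ∞`
and `gcd(u,v) ≠ 1` is expressed as `¬ IsRelPrime u v`. -/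
theorem denominator_dispersion_le_dispersion_of_coeffs
    {K : Type*} [Field K] [CharZero K]
    (m : ℕ) (a : ℕ → Polynomial K) (f : Polynomial K)
    (ha0 : a 0 ≠ 0) (ham : a m ≠ 0)
    (y : RatFunc K)
    (heq : ∑ i ∈ Finset.range (m + 1),
        algebraMap (Polynomial K) (RatFunc K) (a i) * rShift K i y
      = algebraMap (Polynomial K) (RatFunc K) f) :
    (⨆ i ∈ {i : ℕ | ¬ IsRelPrime y.denom (pShift K i y.denom)}, ((i : ℕ∞) : WithBot ℕ∞))
      ≤ ⨆ i ∈ {i : ℕ | ¬ IsRelPrime (pShift K i (a 0)) (pShift K (-(m : ℤ)) (a m))},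
          ((i : ℕ∞) : WithBot ℕ∞) := by
  set p := y.num with hp
  set q := y.denom with hqdef
  have hq : q ≠ 0 := y.denom_ne_zero
  have hcop : IsCoprime p q := y.isCoprime_num_denom
  have hy : algebraMap (Polynomial K) (RatFunc K) p / algebraMap (Polynomial K) (RatFunc K) q
      = y := y.num_div_denom
  have heq' : ∑ i ∈ Finset.range (m + 1),
      algebraMap (Polynomial K) (RatFunc K) (a i) *
        (algebraMap (Polynomial K) (RatFunc K) (pShift K i p) /
         algebraMap (Polynomial K) (RatFunc K) (pShift K i q))
      = algebraMap (Polynomial K) (RatFunc K) f := by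
    rw [← heq]
    refine Finset.sum_congr rfl fun i _ => ?_
    congr 1
    rw [← hy, map_div₀, rShift_algebraMap, rShift_algebraMap]
  have key := cleared m a f p q hq heq'
  apply iSup₂_le
  intro j hj
  -- extract an irreducible common factor
  have hj2 : ∃ c, c ∣ q ∧ c ∣ pShift K j q ∧ ¬ IsUnit c := by
    by_contra hcon
    push_neg at hcon
    exact hj hcon
  obtain ⟨c, hc1, hc2, hc3⟩ := hj2
  have hc0 : c ≠ 0 := ne_zero_of_dvd_ne_zero hq hc1
  obtain ⟨v, hv_irr, hvc⟩ := WfDvdMonoid.exists_irreducible_factor hc3 hc0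
  have hvq : v ∣ q := hvc.trans hc1
  have hvjq : v ∣ pShift K j q := hvc.trans hc2
  set u : Polynomial K := pShift K (-(j : ℤ)) v with hu
  have hu_irr : Irreducible u := (pShift_irreducible_iff _ _).2 hv_irr
  set S : Set ℤ := {t : ℤ | pShift K t u ∣ q} with hS
  have huq : u ∣ q := by
    have h1 := map_dvd (pShift K (-(j : ℤ))) hvjq
    rwa [pShift_pShift, neg_add_cancel, pShift_zero_apply, ← hu] at h1
  have h0S : (0 : ℤ) ∈ S := by
    simp only [hS, Set.mem_setOf_eq, pShift_zero_apply]
    exact huq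
  have hjS : (j : ℤ) ∈ S := by
    simp only [hS, Set.mem_setOf_eq, hu, pShift_pShift, add_neg_cancel, pShift_zero_apply]
    exact hvq
  -- finiteness of S via roots in the algebraic closure
  set A := AlgebraicClosure K
  have hAchar : CharZero A := inferInstance
  have hdegu : u.degree ≠ 0 := fun h =>
    hu_irr.not_isUnit (Polynomial.isUnit_iff_degree_eq_zero.2 h)
  obtain ⟨α, hα⟩ := IsAlgClosed.exists_root (u.map (algebraMap K A))
    (by rwa [Polynomial.degree_map])
  have hroot : ∀ t : ℤ, pShift K t u ∣ q →
      ((q.map (algebraMap K A)).eval (α - (t : A)) = 0) := by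
    intro t ht
    obtain ⟨r, hr⟩ := Polynomial.map_dvd (algebraMap K A) ht
    have he : ((pShift K t u).map (algebraMap K A)).eval (α - (t : A)) = 0 := by
      rw [pShift_apply, Polynomial.map_comp, Polynomial.eval_comp]
      simpa using hα
    rw [hr, Polynomial.eval_mul, he, zero_mul]
  have hSfin : S.Finite := by
    have hsub : S ⊆ (fun t : ℤ => α - (t : A)) ⁻¹'
        {x | x ∈ (q.map (algebraMap K A)).roots} := by
      intro t ht
      simp only [Set.mem_preimage, Set.mem_setOf_eq, Polynomial.mem_roots']
      exact ⟨Polynomial.map_ne_zero hq, hroot t ht⟩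
    refine Set.Finite.subset (Set.Finite.preimage ?_ ?_) hsub
    · intro x _ z _ hxz
      have hxz' : (x : A) = (z : A) := sub_right_injective hxz
      exact_mod_cast hxz'
    · exact (q.map (algebraMap K A)).roots.finite_toSet
  -- max and min of S
  have hSne : S.Nonempty := ⟨0, h0S⟩
  set F := hSfin.toFinset with hF
  have hFne : F.Nonempty := by rwa [hF, Set.Finite.toFinset_nonempty]
  set h : ℤ := F.max' hFne with hhdef
  set l : ℤ := F.min' hFne with hldef
  have hmemF : ∀ t : ℤ, t ∈ S ↔ t ∈ F := fun t => (hSfin.mem_toFinset).symm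
  have hhS : h ∈ S := (hmemF h).2 (F.max'_mem hFne)
  have hlS : l ∈ S := (hmemF l).2 (F.min'_mem hFne)
  have hbound : ∀ t ∈ S, l ≤ t ∧ t ≤ h := fun t ht =>
    ⟨F.min'_le t ((hmemF t).1 ht), F.le_max' t ((hmemF t).1 ht)⟩
  have hl0 : l ≤ 0 := (hbound 0 h0S).1
  have hjh : (j : ℤ) ≤ h := (hbound j hjS).2
  set j' : ℕ := (h - l).toNat with hj'def
  have hj'z : (j' : ℤ) = h - l := Int.toNat_of_nonneg (by omega)
  have hjj' : j ≤ j' := by omega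
  set u' : Polynomial K := pShift K l u with hu'
  have hu'_irr : Irreducible u' := (pShift_irreducible_iff _ _).2 hu_irr
  have hshift : ∀ t : ℤ, pShift K t u' = pShift K (t + l) u := by
    intro t; rw [hu', pShift_pShift]
  have hu'q : u' ∣ q := by
    have := hlS; simpa [hS] using this
  have hu'ext : ∀ t : ℤ, pShift K t u' ∣ q → 0 ≤ t ∧ t ≤ (j' : ℤ) := by
    intro t ht
    rw [hshift] at ht
    have := hbound (t + l) ht
    omega
  have hu'j' : pShift K (j' : ℤ) u' ∣ q := by
    rw [hshift]
    have : (j' : ℤ) + l = h := by omega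
    rw [this]
    simpa [hS] using hhS
  -- u' ∣ a 0
  have hA0 : u' ∣ a 0 := by
    have h0r : (0 : ℕ) ∈ Finset.range (m + 1) := by simp
    have := dvd_coeff_of_key key hu'_irr h0r ?_ ?_ ?_
    · exact this
    · simpa [pShift_zero_apply] using hu'q
    · intro hdvd
      rw [Nat.cast_zero, pShift_zero_apply] at hdvd
      exact hu'_irr.not_isUnit (hcop.isUnit_of_dvd' hdvd hu'q)
    · intro k hk hk0 hdvd
      have h3 : pShift K (-(k : ℤ)) u' ∣ q := by
        have h4 := map_dvd (pShift K (-(k : ℤ))) hdvd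
        have h5 : pShift K (-(k : ℤ)) (pShift K (k : ℤ) q) = q := by
          rw [pShift_pShift, neg_add_cancel, pShift_zero_apply]
        rwa [h5] at h4
      have := hu'ext _ h3
      omega
  -- pShift (j' + m) u' ∣ a m
  have hAm : pShift K ((j' : ℤ) + m) u' ∣ a m := by
    have hmr : m ∈ Finset.range (m + 1) := by simp
    have hw_irr : Irreducible (pShift K ((j' : ℤ) + m) u') :=
      (pShift_irreducible_iff _ _).2 hu'_irr
    have hwq : pShift K ((j' : ℤ) + m) u' ∣ pShift K (m : ℤ) q := by
      have h1 := map_dvd (pShift K (m : ℤ)) hu'j'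
      rwa [pShift_pShift, show (m : ℤ) + (j' : ℤ) = (j' : ℤ) + m by ring] at h1
    have hwp : ¬ pShift K ((j' : ℤ) + m) u' ∣ pShift K (m : ℤ) p := by
      intro hdvd
      have h1 := map_dvd (pShift K (-(m : ℤ))) hdvd
      rw [pShift_pShift, show -(m : ℤ) + ((j' : ℤ) + m) = (j' : ℤ) by ring] at h1
      have h2 : pShift K (-(m : ℤ)) (pShift K (m : ℤ) p) = p := by
        rw [pShift_pShift, neg_add_cancel, pShift_zero_apply]
      rw [h2] at h1
      have hunit := hcop.isUnit_of_dvd' h1 hu'j'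
      exact hu'_irr.not_isUnit ((pShift_isUnit_iff _ _).1 hunit)
    have hwk : ∀ k ∈ Finset.range (m + 1), k ≠ m →
        ¬ pShift K ((j' : ℤ) + m) u' ∣ pShift K (k : ℤ) q := by
      intro k hk hkm hdvd
      have hkle : k ≤ m := Nat.lt_succ_iff.1 (Finset.mem_range.1 hk)
      have h1 := map_dvd (pShift K (-(k : ℤ))) hdvd
      rw [pShift_pShift] at h1
      have h2 : pShift K (-(k : ℤ)) (pShift K (k : ℤ) q) = q := by
        rw [pShift_pShift, neg_add_cancel, pShift_zero_apply]
      rw [h2] at h1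
      have := hu'ext _ h1
      omega
    exact dvd_coeff_of_key key hw_irr hmr hwq hwp hwk
  -- conclude membership in the right-hand set
  have hj'mem : j' ∈ {i : ℕ | ¬ IsRelPrime (pShift K i (a 0)) (pShift K (-(m : ℤ)) (a m))} := by
    intro hrel
    have hd2 : pShift K (j' : ℤ) u' ∣ pShift K (-(m : ℤ)) (a m) := by
      have := map_dvd (pShift K (-(m : ℤ))) hAm
      rwa [pShift_pShift, show -(m:ℤ) + ((j':ℤ) + (m:ℤ)) = (j':ℤ) by ring] at this
    have hd1 : pShift K (j' : ℤ) u' ∣ pShift K (j' : ℤ) (a 0) :=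
      map_dvd (pShift K (j' : ℤ)) hA0
    have hunit := hrel hd1 hd2
    exact hu'_irr.not_isUnit ((pShift_isUnit_iff _ _).1 hunit)
  refine le_iSup₂_of_le j' hj'mem ?_
  exact_mod_cast hjj'
end

section
/- Let p, q ∈ K[n_1,…,n_r] be irreducible and aperiodic. Then Spread(p,q) has at most one element. -/
open MvPolynomial

/-- The substitution homomorphism `n_j ↦ n_j + i_j` on `K[n₁,…,n_r]`. -/
noncomputable def mShiftHom (K : Type*) [Field K] {r : ℕ} (i : Fin r → ℤ) :
    MvPolynomial (Fin r) K →ₐ[K] MvPolynomial (Fin r) K :=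
  aeval (fun j => X j + C (i j : K))

/-- The shift automorphism `N^i` of `K[n₁,…,n_r]`, determined by `n_j ↦ n_j + i_j`. -/
noncomputable def mShift (K : Type*) [Field K] {r : ℕ} (i : Fin r → ℤ) :
    MvPolynomial (Fin r) K ≃ₐ[K] MvPolynomial (Fin r) K :=
  AlgEquiv.ofAlgHom (mShiftHom K i) (mShiftHom K (-i))
    (by apply MvPolynomial.algHom_ext; intro j; simp [mShiftHom])
    (by apply MvPolynomial.algHom_ext; intro j; simp [mShiftHom])

/-- `Spread(p,q) = { i ∈ ℤ^r : gcd(p, N^i q) ≠ 1 }`, where `gcd ≠ 1` (not a unit)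
is expressed as `¬ IsRelPrime`. -/
def mSpread {K : Type*} [Field K] {r : ℕ} (p q : MvPolynomial (Fin r) K) :
    Set (Fin r → ℤ) :=
  {i | ¬ IsRelPrime p (mShift K i q)}

lemma mShift_comp {K : Type*} [Field K] {r : ℕ} (i i' : Fin r → ℤ)
    (f : MvPolynomial (Fin r) K) :
    mShift K i (mShift K i' f) = mShift K (i + i') f := by
  have : (mShiftHom K i).comp (mShiftHom K i') = mShiftHom K (i + i') := by
    apply MvPolynomial.algHom_ext; intro j
    simp [mShiftHom]; push_cast; ring
  have h2 := congrArg (fun (g : MvPolynomial (Fin r) K →ₐ[K] MvPolynomial (Fin r) K) => g f) this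
  simpa [mShift] using h2

lemma mShift_zero {K : Type*} [Field K] {r : ℕ} (f : MvPolynomial (Fin r) K) :
    mShift K (0 : Fin r → ℤ) f = f := by
  have : (mShiftHom K (0 : Fin r → ℤ)) = AlgHom.id K _ := by
    apply MvPolynomial.algHom_ext; intro j; simp [mShiftHom]
  simp [mShift, this]

lemma mShift_assoc {K : Type*} [Field K] {r : ℕ} (i : Fin r → ℤ)
    {a b : MvPolynomial (Fin r) K} (h : Associated a b) :
    Associated (mShift K i a) (mShift K i b) :=
  h.map (mShift K i).toAlgHom.toRingHom.toMonoidHom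

/-- A polynomial `p` is *periodic* if `Spread(p,p)` is infinite, and *aperiodic*
otherwise.  **Lemma:** if `p, q ∈ K[n₁,…,n_r]` are irreducible and aperiodic, then
`Spread(p,q)` has at most one element. -/
theorem spread_subsingleton_of_irreducible_aperiodic
    {K : Type*} [Field K] [CharZero K] {r : ℕ}
    (p q : MvPolynomial (Fin r) K)
    (hp : Irreducible p) (hq : Irreducible q)
    (hpa : (mSpread p p).Finite) (hqa : (mSpread q q).Finite) :
    (mSpread p q).Subsingleton := by
  intro i hi j hj
  have key : ∀ k : Fin r → ℤ, k ∈ mSpread p q → Associated p (mShift K k q) := by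
    intro k hk
    have hirr : Irreducible (mShift K k q) := (MulEquiv.irreducible_iff (mShift K k)).mpr hq
    have hdvd : p ∣ mShift K k q := by
      by_contra hnd
      exact hk (hp.isRelPrime_iff_not_dvd.mpr hnd)
    exact hp.associated_of_dvd hirr hdvd
  have hij : Associated (mShift K i q) (mShift K j q) :=
    (key i hi).symm.trans (key j hj)
  have hd : Associated q (mShift K (j - i) q) := by
    have h2 := mShift_assoc (-i) hij
    rw [mShift_comp, mShift_comp, neg_add_cancel, mShift_zero, neg_add_eq_sub] at h2
    exact h2
  by_contra hne
  have hdne : j - i ≠ 0 := sub_ne_zero.mpr (Ne.symm hne)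
  set d := j - i with hdd
  have hall : ∀ k : ℕ, Associated q (mShift K ((k : ℤ) • d) q) := by
    intro k
    induction k with
    | zero => simpa [mShift_zero] using Associated.refl q
    | succ n ih =>
      have h2 := mShift_assoc ((n : ℤ) • d) hd
      rw [mShift_comp] at h2
      have he : (n : ℤ) • d + d = ((n + 1 : ℕ) : ℤ) • d := by
        ext m; push_cast; simp [add_mul]
      rw [he] at h2
      exact ih.trans h2
  have hsub : Set.range (fun k : ℕ => (k : ℤ) • d) ⊆ mSpread q q := by
    rintro _ ⟨k, rfl⟩
    intro hrp
    exact hq.not_isUnit (hrp dvd_rfl (hall k).dvd)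
  have hinj : Function.Injective (fun k : ℕ => (k : ℤ) • d) := by
    intro a b hab
    obtain ⟨m, hm⟩ : ∃ m, d m ≠ 0 := Function.ne_iff.mp hdne
    have := congrFun hab m
    simp only [Pi.smul_apply, smul_eq_mul] at this
    exact_mod_cast mul_right_cancel₀ hm this
  exact (hqa.subset hsub).not_infinite (Set.infinite_range_of_injective hinj)
end

section
/- Let S ⊆ ℤ^r be finite and nonempty with a_s ∈ K[n]\{0} for s ∈ S, and suppose S is contained in a proper affine subspace of ℚ^r: there exist v = (v_1,…,v_r) ∈ ℤ^r \ {0} and c ∈ ℤ such that ⟨v, s⟩ = c for all s ∈ S. Let p := v_1 n_1 + ⋯ + v_r n_r ∈ K[n] (a nonzero polynomial). Then for every α ∈ ℤ, a rational function y ∈ K(n) satisfies the homogeneous PLDE ∑_{s∈S} a_s N^s y = 0 if and only if y · p^α satisfies it. In particular, if the homogeneous equation has a nonzero rational solution, it has one whose denominator is not divisible by p. -/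
open MvPolynomial

/-- The canonical embedding of `K[n₁,…,n_r]` into its fraction field `K(n₁,…,n_r)`. -/
noncomputable def toFrac (K : Type*) [Field K] {r : ℕ} :
    MvPolynomial (Fin r) K →+* FractionRing (MvPolynomial (Fin r) K) :=
  algebraMap _ _

/-- The shift automorphism `N^i` extended to the fraction field `K(n₁,…,n_r)`. -/
noncomputable def fShift (K : Type*) [Field K] {r : ℕ} (i : Fin r → ℤ) :
    FractionRing (MvPolynomial (Fin r) K) ≃+* FractionRing (MvPolynomial (Fin r) K) :=
  IsFractionRing.ringEquivOfRingEquiv (mShift K i).toRingEquiv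


section Aux

variable {K : Type*} [Field K] [CharZero K] {r : ℕ}

lemma aux_coeff_p (v : Fin r → ℤ) (j : Fin r) :
    coeff (Finsupp.single j 1) (∑ i, C ((v i : K)) * X i) = (v j : K) := by
  rw [MvPolynomial.coeff_sum]
  rw [Finset.sum_eq_single j]
  · rw [coeff_C_mul, coeff_X', if_pos rfl, mul_one]
  · intro i _ hij
    rw [coeff_C_mul, coeff_X', if_neg, mul_zero]
    exact fun h => hij ((Finsupp.single_left_inj (one_ne_zero' ℕ)).mp h)
  · simp

lemma aux_p_add_C_ne_zero (v : Fin r → ℤ) (hv : v ≠ 0) (k : K) :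
    (∑ i, C ((v i : K)) * X i) + C k ≠ 0 := by
  obtain ⟨j, hj⟩ : ∃ j, v j ≠ 0 := by
    by_contra h; push_neg at h; exact hv (funext h)
  intro h
  have := congrArg (coeff (Finsupp.single j 1)) h
  rw [coeff_add, aux_coeff_p, coeff_C] at this
  simp only [coeff_zero] at this
  rw [if_neg (by simp [eq_comm, Finsupp.single_eq_zero])] at this
  exact hj (by exact_mod_cast by simpa using this)

lemma aux_p_ne_zero (v : Fin r → ℤ) (hv : v ≠ 0) :
    (∑ i, C ((v i : K)) * X i) ≠ 0 := by
  have := aux_p_add_C_ne_zero (K := K) v hv 0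
  simpa using this

lemma aux_fShift_toFrac (i : Fin r → ℤ) (q : MvPolynomial (Fin r) K) :
    fShift K i (toFrac K q) = toFrac K (mShift K i q) := by
  simp [fShift, toFrac, IsFractionRing.ringEquivOfRingEquiv,
    IsLocalization.ringEquivOfRingEquiv_eq]
  exact IsLocalization.ringEquivOfRingEquiv_eq _ _

lemma aux_mShift_p (s : Fin r → ℤ) (v : Fin r → ℤ) :
    mShift K s (∑ i, C ((v i : K)) * X i)
      = (∑ i, C ((v i : K)) * X i) + C ((∑ j, v j * s j : ℤ) : K) := by
  have h1 : mShift K s (∑ i, C ((v i : K)) * X i)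
      = ∑ i, C ((v i : K)) * (X i + C ((s i : K))) := by
    simp [mShift, mShiftHom, map_sum]
  rw [h1]
  have h2 : ∀ i ∈ Finset.univ, C ((v i : K)) * (X i + C ((s i : K)))
      = C ((v i : K)) * X i + C ((v i * s i : ℤ) : K) := by
    intro i _; rw [mul_add, ← C_mul]; norm_cast
  rw [Finset.sum_congr rfl h2, Finset.sum_add_distrib]
  congr 1
  rw [← map_sum]
  norm_cast

end Aux

/-- **Degenerate supports.**  Suppose the support `S` lies in a proper affine subspace:
`⟨v, s⟩ = c` for all `s ∈ S`, for some `v ∈ ℤ^r \ {0}` and `c ∈ ℤ`.  Put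
`p := v₁n₁ + ⋯ + v_r n_r`.  Then for every `α ∈ ℤ`, `y` solves the homogeneous PLDE
`∑_{s ∈ S} a_s N^s y = 0` iff `y·p^α` does.  In particular, if the homogeneous equation
has a nonzero rational solution, then it has one whose denominator (in lowest terms)
is not divisible by `p`. -/
theorem periodic_factor_of_degenerate_support
    {K : Type*} [Field K] [CharZero K] {r : ℕ}
    (S : Finset (Fin r → ℤ)) (hS : S.Nonempty)
    (a : (Fin r → ℤ) → MvPolynomial (Fin r) K) (ha : ∀ s ∈ S, a s ≠ 0)
    (v : Fin r → ℤ) (hv : v ≠ 0) (c : ℤ)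
    (hplane : ∀ s ∈ S, ∑ j, v j * s j = c) :
    (∀ (α : ℤ) (y : FractionRing (MvPolynomial (Fin r) K)),
      (∑ s ∈ S, toFrac K (a s) * fShift K s y = 0) ↔
      (∑ s ∈ S, toFrac K (a s) *
          fShift K s (y * (toFrac K (∑ j, C (v j : K) * X j)) ^ α) = 0))
    ∧ ((∃ y : FractionRing (MvPolynomial (Fin r) K), y ≠ 0 ∧
          ∑ s ∈ S, toFrac K (a s) * fShift K s y = 0) →
        ∃ (y : FractionRing (MvPolynomial (Fin r) K))
          (pnum den : MvPolynomial (Fin r) K),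
          y ≠ 0 ∧ (∑ s ∈ S, toFrac K (a s) * fShift K s y = 0) ∧
          den ≠ 0 ∧ IsRelPrime pnum den ∧ y = toFrac K pnum / toFrac K den ∧
          ¬ (∑ j, C (v j : K) * X j) ∣ den) := by
  set p : MvPolynomial (Fin r) K := ∑ j, C ((v j : K)) * X j with hp
  have hp0 : p ≠ 0 := aux_p_ne_zero v hv
  have hinj := IsFractionRing.injective (MvPolynomial (Fin r) K)
    (FractionRing (MvPolynomial (Fin r) K))
  have hmapne : ∀ q : MvPolynomial (Fin r) K, q ≠ 0 → toFrac K q ≠ 0 := by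
    intro q hq h
    exact hq (hinj (show algebraMap _ _ q = algebraMap _ _ 0 by rw [map_zero]; exact h))
  have hP0 : toFrac K p ≠ 0 := hmapne p hp0
  have hQ0 : toFrac K (p + C ((c : K))) ≠ 0 := hmapne _ (aux_p_add_C_ne_zero v hv (c : K))
  have key : ∀ s ∈ S, ∀ (α : ℤ) (y : FractionRing (MvPolynomial (Fin r) K)),
      fShift K s (y * (toFrac K p) ^ α)
        = fShift K s y * (toFrac K (p + C ((c : K)))) ^ α := by
    intro s hs α y
    rw [map_mul, map_zpow₀, aux_fShift_toFrac, hp, aux_mShift_p]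
    rw [show ((∑ j, v j * s j : ℤ) : K) = (c : K) by exact_mod_cast hplane s hs]
  have part1 : ∀ (α : ℤ) (y : FractionRing (MvPolynomial (Fin r) K)),
      (∑ s ∈ S, toFrac K (a s) * fShift K s y = 0) ↔
      (∑ s ∈ S, toFrac K (a s) * fShift K s (y * (toFrac K p) ^ α) = 0) := by
    intro α y
    have hfac : (∑ s ∈ S, toFrac K (a s) * fShift K s (y * (toFrac K p) ^ α))
        = (∑ s ∈ S, toFrac K (a s) * fShift K s y) * (toFrac K (p + C ((c : K)))) ^ α := by
      rw [Finset.sum_mul]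
      exact Finset.sum_congr rfl fun s hs => by rw [key s hs, mul_assoc]
    constructor
    · intro h; rw [hfac, h, zero_mul]
    · intro h
      rw [hfac] at h
      rcases mul_eq_zero.mp h with h | h
      · exact h
      · exact absurd h (zpow_ne_zero _ hQ0)
  refine ⟨part1, ?_⟩
  rintro ⟨y, hy0, hsol⟩
  obtain ⟨num, b, hcop, hmk⟩ :=
    IsFractionRing.exists_reduced_fraction (MvPolynomial (Fin r) K) y
  have hb0 : (b : MvPolynomial (Fin r) K) ≠ 0 := nonZeroDivisors.coe_ne_zero b
  have hpu : ¬ IsUnit p := by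
    intro h
    have h0 : constantCoeff p = 0 := by rw [hp]; simp
    have h1 := h.map constantCoeff
    rw [h0] at h1
    exact not_isUnit_zero h1
  obtain ⟨m, d, hnd, hbd⟩ := WfDvdMonoid.max_power_factor' hb0 hpu
  have hd0 : d ≠ 0 := fun h => hb0 (by rw [hbd, h, mul_zero])
  have hD0 : toFrac K d ≠ 0 := hmapne d hd0
  refine ⟨y * (toFrac K p) ^ (m : ℤ), num, d,
    mul_ne_zero hy0 (zpow_ne_zero _ hP0), (part1 m y).mp hsol, hd0,
    hcop.of_dvd_right ⟨p ^ m, by rw [hbd]; ring⟩, ?_, hnd⟩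
  rw [zpow_natCast, eq_div_iff hD0, mul_assoc]
  have hPb : toFrac K p ^ m * toFrac K d = toFrac K (b : MvPolynomial (Fin r) K) := by
    rw [hbd, map_mul, map_pow]
  rw [hPb, ← hmk]
  exact IsLocalization.mk'_spec _ num b
end
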